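/- If all vertices of a vertex-scalar graph G have distinct scalar values, then for the tree T produced by processing vertices in decreasing scalar order and attaching each new vertex's node as parent of the roots of adjacent already-processed subtrees, the subtree of T rooted at node n(v) corresponds exactly to MCC(v) (the maximal (v.scalar)-connected component containing v). -/

import Mathlib

open Relation
set_option linter.unusedSectionVars false
set_option linter.unusedVariables false
set_option maxHeartbeats 1000000


variable {V : Type*} [Fintype V] [DecidableEq V]

/-- Follow the parent pointers \`p\` for at most \`k\` steps. -/
def iterParent {α : Type*} (p : α → Option α) : ℕ → α → α
  | 0, a => a
  | k + 1, a =>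
    match p a with
    | none => a
    | some b => iterParent p k b

/-- The root of the current subtree containing \`a\` in the forest \`p\`. -/
def rootOf {α : Type*} [Fintype α] (p : α → Option α) (a : α) : α :=
  iterParent p (Fintype.card α) a

/-- Processing vertex \`v\`: for each already-processed neighbor \`u\` whose current
subtree does not contain \`v\`, make \`v\` the parent of the root of that subtree. -/
def stepVert (G : SimpleGraph V) [DecidableRel G.Adj] (v : V) (processed : List V)
    (p : V → Option V) : V → Option V :=
  processed.foldl (fun q u =>
    if G.Adj v u ∧ rootOf q u ≠ v then Function.update q (rootOf q u) (some v) else q) p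

/-- Run the scalar-tree construction on the remaining vertex list, given the
already-processed vertices and the current parent assignment. -/
def runVert (G : SimpleGraph V) [DecidableRel G.Adj] :
    List V → List V → (V → Option V) → (V → Option V)
  | [], _, p => p
  | v :: rest, processed, p => runVert G rest (v :: processed) (stepVert G v processed p)

/-- The parent assignment produced by processing the vertices of \`vs\` in order. -/
def scalarForest (G : SimpleGraph V) [DecidableRel G.Adj] (vs : List V) : V → Option V :=
  runVert G vs [] (fun _ => none)

/-- \`C\` is a maximal α-connected component of the vertex-scalar graph \`(G, f)\`. -/
def IsMACC (G : SimpleGraph V) (f : V → ℝ) (α : ℝ) (C : Set V) : Prop :=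
  C.Nonempty ∧ (∀ v ∈ C, α ≤ f v) ∧
  (∀ v ∈ C, ∀ w, G.Adj v w → w ∉ C → f w < α) ∧
  (G.induce C).Connected

/-! ### Connectivity in induced subgraphs -/

def Ed (G : SimpleGraph V) (A : Set V) (a b : V) : Prop := a ∈ A ∧ b ∈ A ∧ G.Adj a b

def Conn (G : SimpleGraph V) (A : Set V) (u w : V) : Prop :=
  u ∈ A ∧ ReflTransGen (Ed G A) u w

section ConnLemmas
variable {G : SimpleGraph V} {A B : Set V} {u w x : V}

lemma Ed.symm' : Ed G A u w → Ed G A w u := fun ⟨h1, h2, h3⟩ => ⟨h2, h1, h3.symm⟩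

lemma Conn.refl' (h : u ∈ A) : Conn G A u u := ⟨h, ReflTransGen.refl⟩

lemma Conn.mem_left (h : Conn G A u w) : u ∈ A := h.1

lemma Conn.mem_right (h : Conn G A u w) : w ∈ A := by
  obtain ⟨hu, h⟩ := h
  induction h with
  | refl => exact hu
  | tail _ e _ => exact e.2.1

lemma Conn.tail' (h : Conn G A u w) (e : Ed G A w x) : Conn G A u x :=
  ⟨h.1, h.2.tail e⟩

lemma Conn.symm' (h : Conn G A u w) : Conn G A w u :=
  ⟨h.mem_right, by
    obtain ⟨_, h2⟩ := h
    induction h2 with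
    | refl => exact ReflTransGen.refl
    | tail _ e ih => exact ih.head e.symm'⟩

lemma Conn.trans' (h : Conn G A u w) (h' : Conn G A w x) : Conn G A u x :=
  ⟨h.1, h.2.trans h'.2⟩

lemma Conn.mono' (hAB : A ⊆ B) (h : Conn G A u w) : Conn G B u w :=
  ⟨hAB h.1, ReflTransGen.mono (fun _ _ ⟨h1, h2, h3⟩ => ⟨hAB h1, hAB h2, h3⟩) _ _ h.2⟩

lemma Conn.restrict (h : Conn G A u w) (hB : ∀ x, Conn G A u x → x ∈ B) :
    Conn G (A ∩ B) u w := by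
  obtain ⟨hu, h2⟩ := h
  refine ⟨⟨hu, hB u (Conn.refl' hu)⟩, ?_⟩
  induction h2 with
  | refl => exact ReflTransGen.refl
  | @tail b c hb e ih =>
    exact ih.tail ⟨⟨e.1, hB b ⟨hu, hb⟩⟩, ⟨e.2.1, hB c ⟨hu, hb.tail e⟩⟩, e.2.2⟩

end ConnLemmas

/-! ### Forest chains -/

def Pstep (p : V → Option V) (a b : V) : Prop := p a = some b

section PstepLemmas
variable {f : V → ℝ} {p : V → Option V}

lemma det_root {w r : V} (h1 : ReflTransGen (Pstep p) w r) (h2 : p r = none) :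
    ∀ r', ReflTransGen (Pstep p) w r' → p r' = none → r = r' := by
  induction h1 using ReflTransGen.head_induction_on with
  | refl =>
    intro r' h₃ h₄
    rcases h₃.cases_head with h | ⟨b, hb, _⟩
    · exact h
    · have hb' : p r = some b := hb
      rw [h2] at hb'; cases hb'
  | @head a c hac _ ih =>
    intro r' h3 h4
    rcases h3.cases_head with h | ⟨b, hb, hb2⟩
    · subst h
      have hac' : p a = some c := hac
      rw [h4] at hac'; cases hac'
    · have hac' : p a = some c := hac
      have hb' : p a = some b := hb
      have : c = b := by rw [hac'] at hb'; exact Option.some.inj hb'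
      subst this
      exact ih r' hb2 h4

lemma iter_spec (hdec : ∀ x y, p x = some y → f y < f x) :
    ∀ (k : ℕ) (a : V), (Finset.univ.filter fun x => f x ≤ f a).card ≤ k →
      p (iterParent p k a) = none ∧ ReflTransGen (Pstep p) a (iterParent p k a) := by
  intro k
  induction k with
  | zero =>
    intro a ha
    exfalso
    have : a ∈ Finset.univ.filter fun x => f x ≤ f a := by simp
    have := Finset.card_pos.mpr ⟨a, this⟩
    omega
  | succ k ih =>
    intro a ha
    rcases hpa : p a with _ | b
    · constructor
      · simpa [iterParent, hpa] using hpa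
      · have : iterParent p (k+1) a = a := by simp [iterParent, hpa]
        rw [this]
    · have hba : f b < f a := hdec a b hpa
      have hsub : (Finset.univ.filter fun x => f x ≤ f b) ⊂
          (Finset.univ.filter fun x => f x ≤ f a) := by
        constructor
        · intro x hx
          simp only [Finset.mem_filter, Finset.mem_univ, true_and] at *
          exact hx.trans hba.le
        · intro hcon
          have : a ∈ Finset.univ.filter fun x => f x ≤ f b :=
            hcon (by simp)
          simp only [Finset.mem_filter, Finset.mem_univ, true_and] at this
          exact absurd this (not_le.mpr hba)
      have hcard : (Finset.univ.filter fun x => f x ≤ f b).card ≤ k := by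
        have := Finset.card_lt_card hsub
        omega
      obtain ⟨h1, h2⟩ := ih b hcard
      refine ⟨?_, ?_⟩
      · simpa [iterParent, hpa] using h1
      · have : iterParent p (k+1) a = iterParent p k b := by simp [iterParent, hpa]
        rw [this]
        exact ReflTransGen.head hpa h2

lemma rootOf_spec (hdec : ∀ x y, p x = some y → f y < f x) (a : V) :
    p (rootOf p a) = none ∧ ReflTransGen (Pstep p) a (rootOf p a) := by
  apply iter_spec hdec
  exact Finset.card_le_univ _

lemma rootOf_eq (hdec : ∀ x y, p x = some y → f y < f x) {a r : V}
    (h1 : ReflTransGen (Pstep p) a r) (h2 : p r = none) : rootOf p a = r := by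
  obtain ⟨hr, ha⟩ := rootOf_spec hdec a
  exact (det_root h1 h2 (rootOf p a) ha hr).symm

lemma rtg_mono_fun {q : V → Option V} (h : ∀ x y, p x = some y → q x = some y)
    {a b : V} (hab : ReflTransGen (Pstep p) a b) : ReflTransGen (Pstep q) a b :=
  ReflTransGen.mono (fun x y hxy => h x y hxy) _ _ hab

end PstepLemmas

/-! ### The invariant -/

structure SFInv (G : SimpleGraph V) (f : V → ℝ) (D : Set V) (p : V → Option V) : Prop where
  dec : ∀ x y, p x = some y → f y < f x
  dom : ∀ x y, p x = some y → x ∈ D ∧ y ∈ D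
  sub : ∀ u ∈ D, ∀ w, ReflTransGen (Pstep p) w u ↔ Conn G (D ∩ {x | f u ≤ f x}) u w
  min : ∀ x ∈ D, p x = none → ∀ w, Conn G D x w → f x ≤ f w
  root : ∀ u ∈ D, ∃ r, Conn G D u r ∧ p r = none

section InvLemmas
variable {G : SimpleGraph V} {f : V → ℝ} {D : Set V} {p : V → Option V}

lemma SFInv.rootOf_none (h : SFInv G f D p) {u : V} (hu : u ∈ D) :
    p (rootOf p u) = none := (rootOf_spec h.dec u).1

lemma SFInv.rootOf_rtg (h : SFInv G f D p) (u : V) :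
    ReflTransGen (Pstep p) u (rootOf p u) := (rootOf_spec h.dec u).2

/-- key derived fact: the subtree of the root of `u`'s tree is the D-component of `u`. -/
lemma SFInv.rootSpec (h : SFInv G f D p) {u : V} (hu : u ∈ D) :
    Conn G D u (rootOf p u) ∧
    (∀ w, Conn G D u w → f (rootOf p u) ≤ f w) ∧
    (∀ w, ReflTransGen (Pstep p) w (rootOf p u) ↔ Conn G D u w) := by
  obtain ⟨r, hConn, hroot⟩ := h.root u hu
  have hrD : r ∈ D := hConn.mem_right
  have hmin : ∀ w, Conn G D r w → f r ≤ f w := h.min r hrD hroot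
  have key : ∀ w, ReflTransGen (Pstep p) w r ↔ Conn G D u w := by
    intro w
    constructor
    · intro hw
      have := (h.sub r hrD w).mp hw
      exact hConn.trans' (this.mono' (Set.inter_subset_left))
    · intro hw
      have hrw : Conn G D r w := hConn.symm'.trans' hw
      have : Conn G (D ∩ {x | f r ≤ f x}) r w :=
        hrw.restrict (fun x hx => hmin x hx)
      exact (h.sub r hrD w).mpr this
  have hur : ReflTransGen (Pstep p) u r := (key u).mpr (Conn.refl' hu)
  have : rootOf p u = r := rootOf_eq h.dec hur hroot
  rw [this]
  exact ⟨hConn, fun w hw => hmin w (hConn.symm'.trans' hw), key⟩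

/-- Uniqueness of the root within a component. -/
lemma SFInv.root_unique (h : SFInv G f D p) (hinj : Function.Injective f) {u x : V}
    (hu : u ∈ D) (hx : x ∈ D) (hxnone : p x = none) (hcx : Conn G D u x) :
    x = rootOf p u := by
  obtain ⟨hc, hmin, _⟩ := h.rootSpec hu
  have h1 : f (rootOf p u) ≤ f x := hmin x hcx
  have h2 : f x ≤ f (rootOf p u) := h.min x hx hxnone _ (hcx.symm'.trans' hc)
  exact hinj (le_antisymm h2 h1)

end InvLemmas
/-! ### The step: processing one vertex -/

section Step
variable {G : SimpleGraph V} [DecidableRel G.Adj] {f : V → ℝ} {v : V} {D : Set V}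
  {p : V → Option V}

/-- `x` is a root that has been redirected to `v` so far (after handling `done`). -/
def Cnd (G : SimpleGraph V) (v : V) (D : Set V) (p : V → Option V) (done : List V)
    (x : V) : Prop :=
  p x = none ∧ ∃ u ∈ done, G.Adj v u ∧ Conn G D u x

/-- The inner fold invariant. -/
def Jinv (G : SimpleGraph V) (v : V) (D : Set V) (p : V → Option V) (done : List V)
    (q : V → Option V) : Prop :=
  (∀ x, Cnd G v D p done x → q x = some v) ∧ (∀ x, ¬ Cnd G v D p done x → q x = p x)

variable {done : List V} {q : V → Option V}

lemma hvD_of (hv : ∀ u ∈ D, f v < f u) : v ∉ D := fun h => lt_irrefl _ (hv v h)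

lemma J_qv (hInv : SFInv G f D p) (hv : ∀ u ∈ D, f v < f u)
    (hJ : Jinv G v D p done q) : q v = none := by
  have hpv : p v = none := by
    rcases h : p v with _ | y
    · rfl
    · exact absurd (hInv.dom v y h).1 (hvD_of hv)
  have : ¬ Cnd G v D p done v := by
    rintro ⟨-, u, -, -, hc⟩
    exact hvD_of hv hc.mem_right
  rw [hJ.2 v this, hpv]

lemma J_dec (hInv : SFInv G f D p) (hv : ∀ u ∈ D, f v < f u)
    (hJ : Jinv G v D p done q) : ∀ x y, q x = some y → f y < f x := by
  intro x y hxy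
  by_cases hC : Cnd G v D p done x
  · have := hJ.1 x hC
    rw [this] at hxy
    obtain rfl : v = y := Option.some.inj hxy
    obtain ⟨-, u, -, -, hc⟩ := hC
    exact hv x hc.mem_right
  · exact hInv.dec x y (by rw [← hJ.2 x hC]; exact hxy)

lemma J_plift (hJ : Jinv G v D p done q) : ∀ x y, p x = some y → q x = some y := by
  intro x y hxy
  have : ¬ Cnd G v D p done x := fun hC => by rw [hC.1] at hxy; cases hxy
  rw [hJ.2 x this]; exact hxy

lemma J_rootOf_old (hInv : SFInv G f D p) (hv : ∀ u ∈ D, f v < f u)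
    (hJ : Jinv G v D p done q) {u : V} (hu : u ∈ D)
    (hnl : ∀ u' ∈ done, G.Adj v u' → ¬ Conn G D u' u) :
    rootOf q u = rootOf p u := by
  have hqur : ReflTransGen (Pstep q) u (rootOf p u) :=
    rtg_mono_fun (J_plift hJ) (hInv.rootOf_rtg u)
  have hnC : ¬ Cnd G v D p done (rootOf p u) := by
    rintro ⟨-, u', hu', hadj, hc⟩
    exact hnl u' hu' hadj (hc.trans' ((hInv.rootSpec hu).1.symm'))
  have : q (rootOf p u) = none := by rw [hJ.2 _ hnC]; exact hInv.rootOf_none hu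
  exact rootOf_eq (J_dec hInv hv hJ) hqur this

lemma J_rootOf_new (hInv : SFInv G f D p) (hv : ∀ u ∈ D, f v < f u)
    (hJ : Jinv G v D p done q) {u : V} (hu : u ∈ D)
    (hl : ∃ u' ∈ done, G.Adj v u' ∧ Conn G D u' u) :
    rootOf q u = v := by
  obtain ⟨u', hu', hadj, hc⟩ := hl
  have hC : Cnd G v D p done (rootOf p u) :=
    ⟨hInv.rootOf_none hu, u', hu', hadj, hc.trans' (hInv.rootSpec hu).1⟩
  have hqur : ReflTransGen (Pstep q) u (rootOf p u) :=
    rtg_mono_fun (J_plift hJ) (hInv.rootOf_rtg u)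
  have hstep : Pstep q (rootOf p u) v := hJ.1 _ hC
  exact rootOf_eq (J_dec hInv hv hJ) (hqur.tail hstep) (J_qv hInv hv hJ)

lemma fold_spec (hinj : Function.Injective f) (hInv : SFInv G f D p)
    (hv : ∀ u ∈ D, f v < f u) :
    ∀ (todo done : List V) (q : V → Option V), (∀ u ∈ done, u ∈ D) → (∀ u ∈ todo, u ∈ D) →
      Jinv G v D p done q →
      Jinv G v D p (done ++ todo)
        (todo.foldl (fun q u =>
          if G.Adj v u ∧ rootOf q u ≠ v then Function.update q (rootOf q u) (some v) else q) q) := by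
  intro todo
  induction todo with
  | nil => intro done q _ _ hJ; simpa using hJ
  | cons u t ih =>
    intro done q hdone htodo hJ
    have huD : u ∈ D := htodo u (by simp)
    have hJ' : Jinv G v D p (done ++ [u])
        (if G.Adj v u ∧ rootOf q u ≠ v then Function.update q (rootOf q u) (some v) else q) := by
      by_cases hadj : G.Adj v u
      · by_cases hl : ∃ u' ∈ done, G.Adj v u' ∧ Conn G D u' u
        · -- already linked: root of u's subtree is v, guard fails
          have hrv : rootOf q u = v := J_rootOf_new hInv hv hJ huD hl
          rw [if_neg (by simp [hrv])]
          constructor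
          · intro x hC
            rcases hC with ⟨hxnone, u', hu', hadj', hc⟩
            rcases List.mem_append.mp hu' with h | h
            · exact hJ.1 x ⟨hxnone, u', h, hadj', hc⟩
            · -- u' = u : x is a root of u's component, hence x = rootOf p u
              have heq : u' = u := by simpa using h
              have hc2 : Conn G D u x := heq ▸ hc
              obtain ⟨u'', hu'', hadj'', hc''⟩ := hl
              have hx' : x = rootOf p u := hInv.root_unique hinj huD hc2.mem_right hxnone hc2
              rw [hx']
              exact hJ.1 _ ⟨hInv.rootOf_none huD, u'', hu'', hadj'', hc''.trans' (hInv.rootSpec huD).1⟩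
          · intro x hC
            apply hJ.2
            intro ⟨hxnone, u', hu', hadj', hc⟩
            exact hC ⟨hxnone, u', by simp [hu'], hadj', hc⟩
        · -- not linked: root is the old root `r ≠ v`, guard succeeds
          have hr : rootOf q u = rootOf p u := J_rootOf_old hInv hv hJ huD (by
            intro u' hu' hadj' hc
            exact hl ⟨u', hu', hadj', hc⟩)
          have hrD : rootOf p u ∈ D := (hInv.rootSpec huD).1.mem_right
          have hrv : rootOf q u ≠ v := by rw [hr]; exact fun h => hvD_of hv (h ▸ hrD)
          rw [if_pos ⟨hadj, hrv⟩, hr]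
          constructor
          · intro x hC
            rcases hC with ⟨hxnone, u', hu', hadj', hc⟩
            rcases List.mem_append.mp hu' with h | h
            · have hne : x ≠ rootOf p u := by
                intro h'
                refine hl ⟨u', h, hadj', ?_⟩
                exact (h' ▸ hc : Conn G D u' (rootOf p u)).trans' (hInv.rootSpec huD).1.symm'
              rw [Function.update_of_ne hne]
              exact hJ.1 x ⟨hxnone, u', h, hadj', hc⟩
            · have heq : u' = u := by simpa using h
              have hc2 : Conn G D u x := heq ▸ hc
              have hx : x = rootOf p u := hInv.root_unique hinj huD hc2.mem_right hxnone hc2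
              rw [hx, Function.update_self]
          · intro x hC
            have hne : x ≠ rootOf p u := by
              intro h'
              subst h'
              exact hC ⟨hInv.rootOf_none huD, u, by simp, hadj, (hInv.rootSpec huD).1⟩
            rw [Function.update_of_ne hne]
            apply hJ.2
            intro ⟨hxnone, u', hu', hadj', hc⟩
            exact hC ⟨hxnone, u', by simp [hu'], hadj', hc⟩
      · rw [if_neg (by simp [hadj])]
        constructor
        · intro x hC
          rcases hC with ⟨hxnone, u', hu', hadj', hc⟩
          rcases List.mem_append.mp hu' with h | h
          · exact hJ.1 x ⟨hxnone, u', h, hadj', hc⟩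
          · have heq : u' = u := by simpa using h
            exact absurd (heq ▸ hadj') hadj
        · intro x hC
          apply hJ.2
          intro ⟨hxnone, u', hu', hadj', hc⟩
          exact hC ⟨hxnone, u', by simp [hu'], hadj', hc⟩
    have := ih (done ++ [u]) _ (by
      intro w hw
      rcases List.mem_append.mp hw with h | h
      · exact hdone w h
      · simpa using (by simpa using h) ▸ huD) (fun w hw => htodo w (by simp [hw])) hJ'
    simpa [List.append_assoc] using this

end Step
section StepMain
variable {G : SimpleGraph V} [DecidableRel G.Adj] {f : V → ℝ} {v : V}
  {p : V → Option V} {processed : List V}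

lemma stepVert_J (hinj : Function.Injective f)
    (hInv : SFInv G f {x | x ∈ processed} p)
    (hv : ∀ u ∈ {x | x ∈ processed}, f v < f u) :
    Jinv G v {x | x ∈ processed} p processed (stepVert G v processed p) := by
  have := fold_spec hinj hInv hv processed [] p (by simp) (fun u hu => hu)
    ⟨fun x hC => absurd hC.2 (by simp), fun x _ => rfl⟩
  simpa [stepVert] using this

/-- Characterization of ancestors of `v` in `Q` via redirected roots. -/
lemma SQv_iff (hInv : SFInv G f {x | x ∈ processed} p)
    (hv : ∀ u ∈ {x | x ∈ processed}, f v < f u)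
    {Q : V → Option V} (hJ : Jinv G v {x | x ∈ processed} p processed Q) (w : V) :
    ReflTransGen (Pstep Q) w v ↔
      w = v ∨ ∃ u ∈ {x | x ∈ processed}, G.Adj v u ∧ Conn G {x | x ∈ processed} u w := by
  set D := {x : V | x ∈ processed} with hD
  have hvD : v ∉ D := hvD_of hv
  have hpv : p v = none := by
    rcases h : p v with _ | y
    · rfl
    · exact absurd (hInv.dom v y h).1 hvD
  have step1 : ReflTransGen (Pstep Q) w v ↔
      w = v ∨ ∃ r, Cnd G v D p processed r ∧ ReflTransGen (Pstep p) w r := by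
    constructor
    · intro h
      induction h using ReflTransGen.head_induction_on with
      | refl => exact Or.inl rfl
      | @head x b hxb hbv ih =>
        by_cases hb : b = v
        · by_cases hC : Cnd G v D p processed x
          · exact Or.inr ⟨x, hC, ReflTransGen.refl⟩
          · have hx : p x = some v := by rw [← hJ.2 x hC, ← hb]; exact hxb
            exact absurd (hInv.dom x v hx).2 hvD
        · have hCx : ¬ Cnd G v D p processed x := by
            intro hC
            have := hJ.1 x hC
            have hxb' : Q x = some b := hxb
            rw [this] at hxb'
            exact hb (Option.some.inj hxb').symm
          have hx : p x = some b := by rw [← hJ.2 x hCx]; exact hxb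
          rcases ih with h | ⟨r, hC, hrtg⟩
          · exact absurd h hb
          · exact Or.inr ⟨r, hC, hrtg.head hx⟩
    · rintro (rfl | ⟨r, hC, hrtg⟩)
      · exact ReflTransGen.refl
      · have h1 : ReflTransGen (Pstep Q) w r := rtg_mono_fun (J_plift hJ) hrtg
        exact h1.tail (hJ.1 r hC)
  rw [step1]
  constructor
  · rintro (rfl | ⟨r, ⟨hrnone, u, hu, hadj, hcur⟩, hrtg⟩)
    · exact Or.inl rfl
    · refine Or.inr ⟨u, hu, hadj, ?_⟩
      rcases hrtg.cases_head with rfl | ⟨b, hwb, _⟩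
      · exact hcur
      · have hwD : w ∈ D := (hInv.dom w b hwb).1
        have hroot : rootOf p w = r := rootOf_eq hInv.dec hrtg hrnone
        have hcwr : Conn G D w r := hroot ▸ (hInv.rootSpec hwD).1
        exact hcur.trans' hcwr.symm'
  · rintro (rfl | ⟨u, hu, hadj, hcuw⟩)
    · exact Or.inl rfl
    · refine Or.inr ⟨rootOf p u, ⟨hInv.rootOf_none hu, u, hu, hadj, (hInv.rootSpec hu).1⟩, ?_⟩
      exact ((hInv.rootSpec hu).2.2 w).mpr hcuw

/-- Ancestor sets of old vertices are unchanged. -/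
lemma SQu_iff (hInv : SFInv G f {x | x ∈ processed} p)
    (hv : ∀ u ∈ {x | x ∈ processed}, f v < f u)
    {Q : V → Option V} (hJ : Jinv G v {x | x ∈ processed} p processed Q)
    {u : V} (hu : u ∈ {x | x ∈ processed}) (w : V) :
    ReflTransGen (Pstep Q) w u ↔ ReflTransGen (Pstep p) w u := by
  set D := {x : V | x ∈ processed} with hD
  have hvD : v ∉ D := hvD_of hv
  have hpv : p v = none := by
    rcases h : p v with _ | y
    · rfl
    · exact absurd (hInv.dom v y h).1 hvD
  constructor
  · intro h
    induction h using ReflTransGen.head_induction_on with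
    | refl => exact ReflTransGen.refl
    | @head x b hxb hbu ih =>
      by_cases hb : b = v
      · exfalso
        rw [hb] at ih
        rcases ih.cases_head with h | ⟨c, hvc, _⟩
        · exact hvD (h ▸ hu)
        · have : p v = some c := hvc
          rw [hpv] at this; cases this
      · have hCx : ¬ Cnd G v D p processed x := by
          intro hC
          have := hJ.1 x hC
          have hxb' : Q x = some b := hxb
          rw [this] at hxb'
          exact hb (Option.some.inj hxb').symm
        have hx : p x = some b := by rw [← hJ.2 x hCx]; exact hxb
        exact ih.head hx
  · exact fun h => rtg_mono_fun (J_plift hJ) h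

/-- Components of the larger vertex set through `v`. -/
lemma conn_insert_iff {D : Set V} (hvD : v ∉ D) (w : V) :
    Conn G (insert v D) v w ↔ w = v ∨ ∃ u ∈ D, G.Adj v u ∧ Conn G D u w := by
  constructor
  · rintro ⟨-, h⟩
    induction h with
    | refl => exact Or.inl rfl
    | @tail b c hb e ih =>
      by_cases hc : c = v
      · exact Or.inl hc
      · have hcD : c ∈ D := by
          rcases e.2.1 with h | h
          · exact absurd h hc
          · exact h
        rcases ih with rfl | ⟨u, hu, hadj, hcub⟩
        · exact Or.inr ⟨c, hcD, e.2.2, Conn.refl' hcD⟩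
        · have hbD : b ∈ D := hcub.mem_right
          exact Or.inr ⟨u, hu, hadj, hcub.tail' ⟨hbD, hcD, e.2.2⟩⟩
  · rintro (rfl | ⟨u, hu, hadj, hcuw⟩)
    · exact Conn.refl' (Set.mem_insert _ _)
    · have h1 : Conn G (insert v D) v u :=
        (Conn.refl' (Set.mem_insert _ _)).tail'
          ⟨Set.mem_insert _ _, Set.mem_insert_of_mem _ hu, hadj⟩
      exact h1.trans' (hcuw.mono' (Set.subset_insert _ _))

/-- If no neighbor of `v` lies in the `D`-component of `x`, adding `v` does not
enlarge that component. -/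
lemma conn_insert_eq {D : Set V} {x : V} (hx : x ∈ D)
    (hnl : ∀ u, G.Adj v u → ¬ Conn G D x u) {w : V}
    (h : Conn G (insert v D) x w) : Conn G D x w := by
  obtain ⟨-, h⟩ := h
  induction h with
  | refl => exact Conn.refl' hx
  | @tail b c hb e ih =>
    have hbD : b ∈ D := ih.mem_right
    by_cases hc : c = v
    · subst hc
      exact absurd (ih : Conn G D x b) (hnl b e.2.2.symm)
    · have hcD : c ∈ D := by
        rcases e.2.1 with h | h
        · exact absurd h hc
        · exact h
      exact ih.tail' ⟨hbD, hcD, e.2.2⟩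

end StepMain
section StepInv
variable {G : SimpleGraph V} [DecidableRel G.Adj] {f : V → ℝ} {v : V}
  {p : V → Option V} {processed : List V}

lemma step_SFInv (hinj : Function.Injective f)
    (hInv : SFInv G f {x | x ∈ processed} p)
    (hv : ∀ u ∈ {x | x ∈ processed}, f v < f u) :
    SFInv G f (insert v {x | x ∈ processed}) (stepVert G v processed p) := by
  set D := {x : V | x ∈ processed} with hD
  set Q := stepVert G v processed p with hQ
  have hJ : Jinv G v D p processed Q := stepVert_J hinj hInv hv
  have hvD : v ∉ D := hvD_of hv
  have hQv : Q v = none := J_qv hInv hv hJ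
  have hQdec : ∀ x y, Q x = some y → f y < f x := J_dec hInv hv hJ
  have hvle : ∀ x ∈ insert v D, f v ≤ f x := by
    rintro x (rfl | hx)
    · exact le_refl _
    · exact (hv x hx).le
  refine ⟨hQdec, ?_, ?_, ?_, ?_⟩
  · -- dom
    intro x y hxy
    by_cases hC : Cnd G v D p processed x
    · have := hJ.1 x hC
      rw [this] at hxy
      obtain rfl : v = y := Option.some.inj hxy
      obtain ⟨-, u, -, -, hc⟩ := hC
      exact ⟨Set.mem_insert_of_mem _ hc.mem_right, Set.mem_insert _ _⟩
    · have hx : p x = some y := by rw [← hJ.2 x hC]; exact hxy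
      obtain ⟨h1, h2⟩ := hInv.dom x y hx
      exact ⟨Set.mem_insert_of_mem _ h1, Set.mem_insert_of_mem _ h2⟩
  · -- sub
    rintro u (rfl | hu) w
    · -- u = v
      have hset : insert u D ∩ {x | f u ≤ f x} = insert u D := by
        apply Set.inter_eq_self_of_subset_left
        intro x hx
        exact hvle x hx
      rw [hset, SQv_iff hInv hv hJ w, conn_insert_iff hvD w]
    · -- u ∈ D
      have hset : insert v D ∩ {x | f u ≤ f x} = D ∩ {x | f u ≤ f x} := by
        ext x
        simp only [Set.mem_inter_iff, Set.mem_insert_iff, Set.mem_setOf_eq]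
        constructor
        · rintro ⟨rfl | hx, hle⟩
          · exact absurd hle (not_le.mpr (hv u hu))
          · exact ⟨hx, hle⟩
        · rintro ⟨hx, hle⟩
          exact ⟨Or.inr hx, hle⟩
      rw [hset, SQu_iff hInv hv hJ hu w]
      exact hInv.sub u hu w
  · -- min
    rintro x (rfl | hx) hxnone w hcw
    · rcases (conn_insert_iff hvD w).mp hcw with rfl | ⟨u, hu, hadj, hc⟩
      · exact le_refl _
      · exact (hv w hc.mem_right).le
    · have hxC : ¬ Cnd G v D p processed x := fun hC => by
        rw [hJ.1 x hC] at hxnone; cases hxnone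
      have hpx : p x = none := by rw [← hJ.2 x hxC]; exact hxnone
      have hnl : ∀ u, G.Adj v u → ¬ Conn G D x u := by
        intro u hadj hc
        exact hxC ⟨hpx, u, hc.mem_right, hadj, hc.symm'⟩
      have : Conn G D x w := conn_insert_eq hx hnl hcw
      exact hInv.min x hx hpx w this
  · -- root
    rintro u (rfl | hu)
    · exact ⟨u, Conn.refl' (Set.mem_insert _ _), hQv⟩
    · by_cases hC : Cnd G v D p processed (rootOf p u)
      · refine ⟨v, ?_, hQv⟩
        obtain ⟨-, u', hu', hadj, hc⟩ := hC
        have h1 : Conn G (insert v D) u (rootOf p u) :=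
          (hInv.rootSpec hu).1.mono' (Set.subset_insert _ _)
        have h2 : Conn G (insert v D) (rootOf p u) u' :=
          (hc.symm').mono' (Set.subset_insert _ _)
        exact (h1.trans' h2).tail'
          ⟨Set.mem_insert_of_mem _ hu', Set.mem_insert _ _, hadj.symm⟩
      · refine ⟨rootOf p u, (hInv.rootSpec hu).1.mono' (Set.subset_insert _ _), ?_⟩
        rw [hJ.2 _ hC]
        exact hInv.rootOf_none hu

end StepInv
section RunMain
variable {G : SimpleGraph V} [DecidableRel G.Adj] {f : V → ℝ}

lemma run_SFInv (hinj : Function.Injective f) :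
    ∀ (rest processed : List V) (p : V → Option V),
      SFInv G f {x | x ∈ processed} p →
      (∀ a ∈ rest, ∀ u ∈ processed, f a < f u) →
      rest.Pairwise (fun a b => f b < f a) →
      SFInv G f {x | x ∈ rest ∨ x ∈ processed} (runVert G rest processed p) := by
  intro rest
  induction rest with
  | nil =>
    intro processed p h _ _
    have hset : {x : V | x ∈ ([] : List V) ∨ x ∈ processed} = {x | x ∈ processed} := by
      ext x; simp
    rw [hset]
    exact h
  | cons a t ih =>
    intro processed p h hlt hpw
    have h1 : ∀ u ∈ {x : V | x ∈ processed}, f a < f u := fun u hu => hlt a (by simp) u hu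
    have h2 := step_SFInv hinj h h1
    have hset : insert a {x : V | x ∈ processed} = {x | x ∈ a :: processed} := by
      ext x; simp
    rw [hset] at h2
    have hlt' : ∀ b ∈ t, ∀ u ∈ a :: processed, f b < f u := by
      intro b hb u hu
      rcases List.mem_cons.mp hu with rfl | hu
      · exact (List.pairwise_cons.mp hpw).1 b hb
      · exact hlt b (List.mem_cons_of_mem _ hb) u hu
    have h3 := ih (a :: processed) _ h2 hlt' (List.pairwise_cons.mp hpw).2
    have hset2 : {x : V | x ∈ t ∨ x ∈ a :: processed} =
        {x | x ∈ a :: t ∨ x ∈ processed} := by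
      ext x; simp; tauto
    rw [hset2] at h3
    exact h3

lemma base_SFInv : SFInv G f {x : V | x ∈ ([] : List V)} (fun _ => none) := by
  refine ⟨?_, ?_, ?_, ?_, ?_⟩ <;> simp

/-- Connectivity of the induced graph on a component. -/
lemma induce_reach {A : Set V} {a : V} (ha : a ∈ A) :
    ∀ w, ReflTransGen (Ed G A) a w → ∀ hw : w ∈ {x | Conn G A a x},
      (G.induce {x | Conn G A a x}).Reachable ⟨a, Conn.refl' ha⟩ ⟨w, hw⟩ := by
  intro w h
  induction h with
  | refl => intro _; rfl
  | @tail b c hb e ih =>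
    intro hw
    have hbS : b ∈ {x | Conn G A a x} := ⟨ha, hb⟩
    refine (ih hbS).trans (SimpleGraph.Adj.reachable ?_)
    exact e.2.2

end RunMain

/-- If all scalar values are distinct, then for the tree produced by the
decreasing-order construction, the subtree rooted at `n(v)` is exactly
`MCC(v)`, the maximal `f v`-connected component containing `v`. -/
theorem stmt10 (G : SimpleGraph V) [DecidableRel G.Adj] (f : V → ℝ)
    (hinj : Function.Injective f)
    (vs : List V) (hnd : vs.Nodup) (hall : ∀ v : V, v ∈ vs)
    (hsort : vs.Pairwise (fun a b => f b ≤ f a)) (v : V) :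
    v ∈ {u : V | Relation.ReflTransGen
          (fun a b => scalarForest G vs a = some b) u v} ∧
    IsMACC G f (f v)
      {u : V | Relation.ReflTransGen
        (fun a b => scalarForest G vs a = some b) u v} := by

  have hpw : vs.Pairwise fun a b => f b < f a := by
    have := hsort.and hnd
    exact this.imp fun {a b} ⟨h1, h2⟩ => lt_of_le_of_ne h1 fun hfe => h2 (hinj hfe).symm
  have hInv0 := run_SFInv (G := G) hinj vs [] (fun _ => none) base_SFInv
    (by simp) hpw
  have hset : {x : V | x ∈ vs ∨ x ∈ ([] : List V)} = Set.univ := by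
    ext x; simp [hall x]
  rw [hset] at hInv0
  set Q := runVert G vs [] (fun _ => none) with hQ
  have hQeq : scalarForest G vs = Q := rfl
  set A : Set V := {x | f v ≤ f x} with hA
  have hsub := hInv0.sub v (Set.mem_univ v)
  have hAeq : Set.univ ∩ {x : V | f v ≤ f x} = A := by rw [Set.univ_inter]
  rw [hAeq] at hsub
  have hSeq : {u : V | Relation.ReflTransGen
      (fun a b => scalarForest G vs a = some b) u v} = {w | Conn G A v w} := by
    ext w
    rw [hQeq]
    exact hsub w
  have hvA : v ∈ A := le_refl (f v)
  constructor
  · exact Relation.ReflTransGen.refl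
  · rw [hSeq]
    refine ⟨⟨v, Conn.refl' hvA⟩, ?_, ?_, ?_⟩
    · intro w hw
      exact hw.mem_right
    · intro u hu w hadj hw
      by_contra hcon
      push_neg at hcon
      exact hw ((hu : Conn G A v u).tail' ⟨hu.mem_right, hcon, hadj⟩)
    · have hne : Nonempty ({w | Conn G A v w} : Set V) := ⟨⟨v, Conn.refl' hvA⟩⟩
      refine SimpleGraph.Connected.mk ?_
      intro a b
      have ha := a.2
      have hb := b.2
      have h1 := induce_reach (G := G) hvA a.1 (ha : Conn G A v a.1).2 a.2
      have h2 := induce_reach (G := G) hvA b.1 (hb : Conn G A v b.1).2 b.2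
      exact h1.symm.trans h2
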